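/- Let (S,d) be a compact metric space, c̃ : S × S → [0,∞) an L-Lipschitz function in its first argument (uniformly in the second), k > 1, and λ > 0. Define h(w,y,λ) = sup_x { -c̃(x,y) - λ·d(x,w)^k }. Then for all w, y: h(w,y,λ) + c̃(w,y) ≤ 2·L^{k/(k-1)}/λ^{1/(k-1)}. -/

import Mathlib

lemma key_bound (L lam k : ℝ) (hL : 0 < L) (hlam : 0 < lam) (hk : 1 < k)
    (t : ℝ) (ht : 0 ≤ t) :
    L * t - lam * t ^ k ≤ 2 * L ^ (k / (k - 1)) / lam ^ (1 / (k - 1)) := by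
  have hk1 : 0 < k - 1 := by linarith
  have hq : (0:ℝ) < L / lam := div_pos hL hlam
  set s : ℝ := (L / lam) ^ (1 / (k - 1)) with hs
  have hspos : 0 < s := Real.rpow_pos_of_pos hq _
  have hRpos : 0 < L ^ (k / (k - 1)) / lam ^ (1 / (k - 1)) :=
    div_pos (Real.rpow_pos_of_pos hL _) (Real.rpow_pos_of_pos hlam _)
  have hsk : s ^ (k - 1) = L / lam := by
    rw [hs, ← Real.rpow_mul hq.le, one_div_mul_cancel (ne_of_gt hk1), Real.rpow_one]
  have hR2 : 2 * L ^ (k / (k - 1)) / lam ^ (1 / (k - 1)) =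
      2 * (L ^ (k / (k - 1)) / lam ^ (1 / (k - 1))) := by ring
  rcases le_or_gt t s with hts | hts
  · have h1 : L * t ≤ L * s := by nlinarith
    have h2 : L * s = L ^ (k / (k - 1)) / lam ^ (1 / (k - 1)) := by
      rw [hs, Real.div_rpow hL.le hlam.le, ← mul_div_assoc]
      congr 1
      nth_rewrite 1 [← Real.rpow_one L]
      rw [← Real.rpow_add hL]
      congr 1
      field_simp
      ring
    have h3 : 0 ≤ lam * t ^ k := by positivity
    nlinarith
  · have htpos : 0 < t := lt_trans hspos hts
    have h1 : s ^ (k - 1) < t ^ (k - 1) :=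
      Real.rpow_lt_rpow hspos.le hts hk1
    have h2 : t ^ k = t ^ (k - 1) * t := by
      rw [show k = (k-1)+1 by ring, Real.rpow_add htpos, Real.rpow_one]
      ring_nf
    have h3 : L * t ≤ lam * t ^ k := by
      rw [h2]
      have : L / lam < t ^ (k - 1) := hsk ▸ h1
      have h4 : L < lam * t ^ (k - 1) := by
        rwa [div_lt_iff₀ hlam, mul_comm] at this
      nlinarith
    nlinarith

theorem stmt_18 {S : Type*} [MetricSpace S] [CompactSpace S] [Nonempty S]
    (ct : S → S → ℝ) (hct : ∀ x y, 0 ≤ ct x y)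
    (L : ℝ) (hL : 0 < L)
    (hlip : ∀ x x' y : S, |ct x y - ct x' y| ≤ L * dist x x')
    (k lam : ℝ) (hk : 1 < k) (hlam : 0 < lam) :
    ∀ w y : S,
      (⨆ x : S, (-ct x y - lam * (dist x w) ^ k)) + ct w y ≤
        2 * L ^ (k / (k - 1)) / lam ^ (1 / (k - 1)) := by
  intro w y
  have h : (⨆ x : S, (-ct x y - lam * (dist x w) ^ k)) ≤
      2 * L ^ (k / (k - 1)) / lam ^ (1 / (k - 1)) - ct w y := by
    apply ciSup_le
    intro x
    have hlw : ct w y - ct x y ≤ L * dist x w := by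
      have := hlip w x y
      have h2 : |ct w y - ct x y| ≤ L * dist w x := this
      rw [dist_comm] at h2
      exact (le_abs_self _).trans h2
    have := key_bound L lam k hL hlam hk (dist x w) dist_nonneg
    linarith
  linarith
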